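/- Let n, k, l be integers with 1 ≤ k < l ≤ n−1 and k + l ≤ n. If n ≠ k + l, then the automorphism group of the set-inclusion graph G(n,k,l) is isomorphic to the symmetric group Sym([n]) on n letters. -/

import Mathlib

open SimpleGraph

/-- The set-inclusion graph `G(n,k,l)`: vertices are all `k`-element subsets and all
`l`-element subsets of `[n]`, two distinct vertices being adjacent iff one is contained
in the other. -/
def setInclusionGraph (n k l : ℕ) :
    SimpleGraph {s : Finset (Fin n) // s.card = k ∨ s.card = l} where
  Adj v w := v.1 ⊂ w.1 ∨ w.1 ⊂ v.1
  symm := ⟨by intro v w h; tauto⟩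
  loopless := ⟨by intro v h; rcases h with h | h <;> exact h.ne rfl⟩

open Finset


lemma card_supersets {n : ℕ} (A : Finset (Fin n)) (l : ℕ) (hA : A.card ≤ l) :
    ((univ.powersetCard l).filter (fun B => A ⊆ B)).card = (n - A.card).choose (l - A.card) := by
  have hc : Aᶜ.card = n - A.card := by
    rw [Finset.card_compl, Fintype.card_fin]
  rw [← hc, ← Finset.card_powersetCard (l - A.card) Aᶜ]
  apply Finset.card_bij (fun B _ => B \ A)
  · intro B hB
    simp only [mem_filter, Finset.mem_powersetCard_univ] at hB
    rw [Finset.mem_powersetCard]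
    refine ⟨fun x hx => ?_, ?_⟩
    · simp only [Finset.mem_compl]
      exact fun h => (Finset.mem_sdiff.mp hx).2 h
    · rw [Finset.card_sdiff_of_subset hB.2, hB.1]
  · intro B1 h1 B2 h2 heq
    simp only [mem_filter, Finset.mem_powersetCard_univ] at h1 h2
    rw [← Finset.sdiff_union_of_subset h1.2, ← Finset.sdiff_union_of_subset h2.2, heq]
  · intro C hC
    rw [Finset.mem_powersetCard] at hC
    have hd : Disjoint C A := by
      rw [Finset.disjoint_right]
      intro a ha haC
      exact (Finset.mem_compl.mp (hC.1 haC)) ha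
    refine ⟨C ∪ A, ?_, ?_⟩
    · simp only [mem_filter, Finset.mem_powersetCard_univ]
      constructor
      · rw [Finset.card_union_of_disjoint hd, hC.2]
        omega
      · exact Finset.subset_union_right
    · rw [Finset.union_sdiff_right, Finset.sdiff_eq_self_of_disjoint hd]


lemma choose_sub_step {n l u : ℕ} (hln : l < n) (h : u < l) :
    (n - (u+1)).choose (l - (u+1)) < (n - u).choose (l - u) := by
  have h1 : n - u = (n - (u+1)) + 1 := by omega
  have h2 : l - u = (l - (u+1)) + 1 := by omega
  rw [h1, h2, Nat.choose_succ_succ]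
  simp only [Nat.succ_eq_add_one]
  have : 0 < (n - (u+1)).choose (l - (u+1) + 1) := Nat.choose_pos (by omega)
  omega

lemma choose_sub_lt {n l : ℕ} (hln : l < n) : ∀ {u v : ℕ}, u < v → v ≤ l →
    (n - v).choose (l - v) < (n - u).choose (l - u) := by
  intro u v huv hvl
  induction v with
  | zero => omega
  | succ w ih =>
    rcases Nat.lt_or_ge u w with h | h
    · exact lt_trans (choose_sub_step hln (by omega)) (ih h (by omega))
    · have : u = w := by omega
      subst this
      exact choose_sub_step hln (by omega)

lemma choose_sub_injOn {n l : ℕ} (hln : l < n) {u v : ℕ} (hu : u ≤ l) (hv : v ≤ l)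
    (h : (n - u).choose (l - u) = (n - v).choose (l - v)) : u = v := by
  rcases Nat.lt_trichotomy u v with h' | h' | h'
  · exact absurd h (Nat.ne_of_gt (choose_sub_lt hln h' hv))
  · exact h'
  · exact absurd h (Nat.ne_of_lt (choose_sub_lt hln h' hu))


lemma triple_lemma {n K : ℕ} (hK : 2 ≤ K) {X Y Z : Finset (Fin n)}
    (hX : X.card = K) (hY : Y.card = K) (hZ : Z.card = K)
    (hXZ : (X ∩ Z).card + 1 = K) (hYZ : (Y ∩ Z).card + 1 = K)
    (hXYc : (X ∩ Y).card + 1 = K) :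
    X ∩ Y ⊆ Z ∨ Z ⊆ X ∪ Y := by
  by_cases hc : X ∩ Y ⊆ Z
  · exact Or.inl hc
  right
  obtain ⟨x, hxXY, hxZ⟩ := not_subset.mp hc
  have hxX : x ∈ X := (mem_inter.mp hxXY).1
  have hxY : x ∈ Y := (mem_inter.mp hxXY).2
  have sdiff_singleton : ∀ W : Finset (Fin n), W.card = K → (W ∩ Z).card + 1 = K →
      x ∈ W → W \ Z = {x} := by
    intro W hW hWZ hxW
    have hcd : (W \ Z).card = 1 := by
      have := Finset.card_inter_add_card_sdiff W Z
      omega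
    obtain ⟨y, hy⟩ := Finset.card_eq_one.mp hcd
    have : x ∈ W \ Z := mem_sdiff.mpr ⟨hxW, hxZ⟩
    rw [hy] at this ⊢
    rw [mem_singleton] at this
    rw [this]
  have hXZ' : X \ Z = {x} := sdiff_singleton X hX hXZ hxX
  have hYZ' : Y \ Z = {x} := sdiff_singleton Y hY hYZ hxY
  have hmemZ : ∀ y, y ∈ X → y ≠ x → y ∈ Z := by
    intro y hyX hyx
    by_contra hyZ
    have : y ∈ X \ Z := mem_sdiff.mpr ⟨hyX, hyZ⟩
    rw [hXZ', mem_singleton] at this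
    exact hyx this
  have hmemZ' : ∀ y, y ∈ Y → y ≠ x → y ∈ Z := by
    intro y hyY hyx
    by_contra hyZ
    have : y ∈ Y \ Z := mem_sdiff.mpr ⟨hyY, hyZ⟩
    rw [hYZ', mem_singleton] at this
    exact hyx this
  have hXYZ : X ∩ Y ∩ Z = (X ∩ Y).erase x := by
    ext y
    simp only [mem_inter, mem_erase]
    constructor
    · rintro ⟨⟨h1, h2⟩, h3⟩
      exact ⟨fun h => hxZ (h ▸ h3), h1, h2⟩
    · rintro ⟨h1, h2, h3⟩
      exact ⟨⟨h2, h3⟩, hmemZ y h2 h1⟩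
  have hXYZcard : (X ∩ Y ∩ Z).card + 2 = K := by
    rw [hXYZ, Finset.card_erase_of_mem hxXY]
    omega
  have hdistrib : Z ∩ (X ∪ Y) = (Z ∩ X) ∪ (Z ∩ Y) := Finset.inter_union_distrib_left Z X Y
  have hcup : ((Z ∩ X) ∪ (Z ∩ Y)).card + ((Z ∩ X) ∩ (Z ∩ Y)).card = (Z ∩ X).card + (Z ∩ Y).card :=
    Finset.card_union_add_card_inter _ _
  have he1 : (Z ∩ X) ∩ (Z ∩ Y) = X ∩ Y ∩ Z := by
    ext y; simp only [mem_inter]; tauto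
  have he2 : (Z ∩ X).card = (X ∩ Z).card := by rw [Finset.inter_comm]
  have he3 : (Z ∩ Y).card = (Y ∩ Z).card := by rw [Finset.inter_comm]
  have hfin : (Z ∩ (X ∪ Y)).card = K := by
    rw [hdistrib]
    rw [he1, he2, he3] at hcup
    omega
  have : Z ∩ (X ∪ Y) = Z :=
    Finset.eq_of_subset_of_card_le (Finset.inter_subset_left) (by rw [hfin, hZ])
  rw [← this]
  exact Finset.inter_subset_right


lemma insert_inter_insert {n : ℕ} {S : Finset (Fin n)} {x y : Fin n}
    (hxy : x ≠ y) : insert x S ∩ insert y S = S := by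
  ext z
  simp only [mem_inter, mem_insert]
  constructor
  · rintro ⟨hx' | hz, hy' | hz⟩
    · exact absurd (hx'.symm.trans hy') hxy
    · exact hz
    · exact hz
    · exact hz
  · intro hz; exact ⟨Or.inr hz, Or.inr hz⟩

lemma exists_insert_eq {n k : ℕ} {S A : Finset (Fin n)} (hS : S.card = k)
    (hA : A.card = k + 1) (hSA : S ⊆ A) : ∃ d, d ∉ S ∧ A = insert d S := by
  have h1 : (A \ S).card = 1 := by
    rw [Finset.card_sdiff_of_subset hSA, hS, hA]; omega
  obtain ⟨d, hd⟩ := Finset.card_eq_one.mp h1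
  have hdm : d ∈ A \ S := hd ▸ mem_singleton_self d
  have hdS : d ∉ S := (mem_sdiff.mp hdm).2
  refine ⟨d, hdS, ?_⟩
  apply Finset.eq_of_subset_of_card_le
  · intro z hz
    by_cases h : z ∈ S
    · exact Finset.mem_insert_of_mem h
    · have : z ∈ A \ S := mem_sdiff.mpr ⟨hz, h⟩
      rw [hd, mem_singleton] at this
      exact this ▸ Finset.mem_insert_self d S
  · rw [hA, Finset.card_insert_of_notMem hdS, hS]

lemma star_lemma {n k : ℕ} (hk : 1 ≤ k) (hn : 2 * (k+1) < n)
    (f : Finset (Fin n) → Finset (Fin n))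
    (hcard : ∀ A, A.card = k+1 → (f A).card = k+1)
    (hinj : ∀ A B, A.card = k+1 → B.card = k+1 → f A = f B → A = B)
    (hadj : ∀ A B, A.card = k+1 → B.card = k+1 →
      ((A ∩ B).card + 1 = k+1 ↔ ((f A) ∩ (f B)).card + 1 = k+1))
    (S : Finset (Fin n)) (hS : S.card = k) :
    ∃ S', S'.card = k ∧ ∀ A, A.card = k+1 → S ⊆ A → S' ⊆ f A := by
  have hSc : (Sᶜ).card = n - k := by rw [card_compl, Fintype.card_fin, hS]
  have hext_card : ∀ x : Fin n, x ∉ S → (insert x S).card = k + 1 := by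
    intro x hx; rw [Finset.card_insert_of_notMem hx, hS]
  have hext_adj : ∀ x y : Fin n, x ∉ S → y ∉ S → x ≠ y →
      (f (insert x S) ∩ f (insert y S)).card + 1 = k + 1 := by
    intro x y hx hy hxy
    apply (hadj _ _ (hext_card x hx) (hext_card y hy)).mp
    rw [insert_inter_insert hxy, hS]
  have h2 : 1 < (Sᶜ).card := by omega
  obtain ⟨a, ha, b, hb, hab⟩ := Finset.one_lt_card.mp h2
  rw [Finset.mem_compl] at ha hb
  have hS0card : (f (insert a S) ∩ f (insert b S)).card = k := by
    have := hext_adj a b ha hb hab; omega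
  have hUcard : (f (insert a S) ∪ f (insert b S)).card = k + 2 := by
    have h1 := Finset.card_union_add_card_inter (f (insert a S)) (f (insert b S))
    have h2 := hcard _ (hext_card a ha)
    have h3 := hcard _ (hext_card b hb)
    omega
  have hexc : ∃ c, c ∉ S ∧ ¬ f (insert c S) ⊆ f (insert a S) ∪ f (insert b S) := by
    by_contra h
    push_neg at h
    have hmem : ∀ x ∈ Sᶜ,
        f (insert x S) ∈ (f (insert a S) ∪ f (insert b S)).powersetCard (k+1) := by
      intro x hx
      rw [Finset.mem_compl] at hx
      rw [Finset.mem_powersetCard]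
      exact ⟨h x hx, hcard _ (hext_card x hx)⟩
    have hinj' : ∀ x ∈ Sᶜ, ∀ y ∈ Sᶜ, f (insert x S) = f (insert y S) → x = y := by
      intro x hx y hy heq
      rw [Finset.mem_compl] at hx hy
      have := hinj _ _ (hext_card x hx) (hext_card y hy) heq
      have hx' : x ∈ insert y S := this ▸ Finset.mem_insert_self x S
      rcases Finset.mem_insert.mp hx' with h' | h'
      · exact h'
      · exact absurd h' hx
    have hle := Finset.card_le_card_of_injOn _ hmem hinj'
    rw [Finset.card_powersetCard, hUcard, hSc] at hle
    have hch : (k+2).choose (k+1) = k + 2 := by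
      have h2' := Nat.choose_symm (show 1 ≤ k+2 by omega)
      rw [show k+2-1 = k+1 from rfl] at h2'
      rw [h2', Nat.choose_one_right]
    omega
  obtain ⟨c, hc, hcU⟩ := hexc
  have hca : c ≠ a := by
    intro h; rw [h] at hcU; exact hcU Finset.subset_union_left
  have hcb : c ≠ b := by
    intro h; rw [h] at hcU; exact hcU Finset.subset_union_right
  have hSC : f (insert a S) ∩ f (insert b S) ⊆ f (insert c S) := by
    rcases triple_lemma (by omega) (hcard _ (hext_card a ha)) (hcard _ (hext_card b hb))
      (hcard _ (hext_card c hc)) (hext_adj a c ha hc (Ne.symm hca))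
      (hext_adj b c hb hc (Ne.symm hcb)) (hext_adj a b ha hb hab) with h | h
    · exact h
    · exact absurd h hcU
  refine ⟨f (insert a S) ∩ f (insert b S), hS0card, ?_⟩
  intro A' hA'card hSA'
  obtain ⟨d, hdS, rfl⟩ := exists_insert_eq hS hA'card hSA'
  by_cases hda : d = a
  · rw [hda]; exact Finset.inter_subset_left
  by_cases hdb : d = b
  · rw [hdb]; exact Finset.inter_subset_right
  by_cases hdc : d = c
  · rw [hdc]; exact hSC
  rcases triple_lemma (K := k+1) (by omega) (hcard _ (hext_card a ha)) (hcard _ (hext_card b hb))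
    (hcard _ (hext_card d hdS)) (hext_adj a d ha hdS (fun h => hda h.symm))
    (hext_adj b d hb hdS (fun h => hdb h.symm)) (hext_adj a b ha hb hab) with h | hDU
  · exact h
  have hACcard := hext_adj a c ha hc (Ne.symm hca)
  have hACeq : f (insert a S) ∩ f (insert c S) = f (insert a S) ∩ f (insert b S) := by
    apply (Finset.eq_of_subset_of_card_le
      (Finset.subset_inter Finset.inter_subset_left hSC) ?_).symm
    rw [hS0card]; omega
  rcases triple_lemma (K := k+1) (by omega) (hcard _ (hext_card a ha)) (hcard _ (hext_card c hc))
    (hcard _ (hext_card d hdS)) (hext_adj a d ha hdS (fun h => hda h.symm))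
    (hext_adj c d hc hdS (fun h => hdc h.symm)) hACcard with h | hDAC
  · rw [hACeq] at h; exact h
  exfalso
  have hBCeq : f (insert b S) ∩ f (insert c S) = f (insert a S) ∩ f (insert b S) := by
    apply (Finset.eq_of_subset_of_card_le
      (Finset.subset_inter Finset.inter_subset_right hSC) ?_).symm
    rw [hS0card]
    have := hext_adj b c hb hc (Ne.symm hcb); omega
  have hCU : f (insert c S) ∩ (f (insert a S) ∪ f (insert b S))
      = f (insert a S) ∩ f (insert b S) := by
    rw [Finset.inter_union_distrib_left, Finset.inter_comm (f (insert c S)) (f (insert a S)),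
      hACeq, Finset.inter_comm (f (insert c S)) (f (insert b S)), hBCeq, Finset.union_self]
  have hsub : f (insert d S) ⊆ f (insert a S) := by
    intro x hx
    have hxU : x ∈ f (insert a S) ∪ f (insert b S) := hDU hx
    rcases Finset.mem_union.mp (hDAC hx) with h' | h'
    · exact h'
    · have hxm : x ∈ f (insert c S) ∩ (f (insert a S) ∪ f (insert b S)) :=
        Finset.mem_inter.mpr ⟨h', hxU⟩
      rw [hCU] at hxm
      exact Finset.inter_subset_left hxm
  have heq : f (insert d S) = f (insert a S) := Finset.eq_of_subset_of_card_le hsub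
    (by rw [hcard _ (hext_card a ha), hcard _ (hext_card d hdS)])
  have hDA : insert d S = insert a S := hinj _ _ (hext_card d hdS) (hext_card a ha) heq
  have hdm : d ∈ insert a S := hDA ▸ Finset.mem_insert_self d S
  rcases Finset.mem_insert.mp hdm with h' | h'
  · exact hda h'
  · exact hdS h'

theorem johnson_key {n : ℕ} : ∀ (K : ℕ), 2 * K < n →
    ∀ f : Finset (Fin n) → Finset (Fin n),
    (∀ A, A.card = K → (f A).card = K) →
    (∀ A B, A.card = K → B.card = K → f A = f B → A = B) →
    (∀ A B, A.card = K → B.card = K →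
      ((A ∩ B).card + 1 = K ↔ ((f A) ∩ (f B)).card + 1 = K)) →
    ∃ σ : Equiv.Perm (Fin n), ∀ A, A.card = K → f A = A.image σ := by
  intro K
  induction K with
  | zero =>
    intro hn f hcard hinj hadj
    refine ⟨1, fun A hA => ?_⟩
    rw [Finset.card_eq_zero] at hA
    subst hA
    have h0 := hcard ∅ rfl
    rw [Finset.card_eq_zero] at h0
    simp [h0]
  | succ k ih =>
    intro hn f hcard hinj hadj
    rcases Nat.eq_zero_or_pos k with rfl | hkpos
    · -- K = 1
      have hsing : ∀ i : Fin n, ∃ j, f {i} = {j} := fun i =>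
        Finset.card_eq_one.mp (hcard {i} (Finset.card_singleton i))
      choose t ht using hsing
      have tinj : Function.Injective t := by
        intro i j hij
        have h1 : f {i} = f {j} := by rw [ht, ht, hij]
        have h2 := hinj _ _ (card_singleton i) (card_singleton j) h1
        exact Finset.singleton_inj.mp h2
      refine ⟨Equiv.ofBijective t (Finite.injective_iff_bijective.mp tinj), fun A hA => ?_⟩
      obtain ⟨i, rfl⟩ := Finset.card_eq_one.mp hA
      rw [ht, Finset.image_singleton]
      rfl
    · -- K = k+1, k ≥ 1
      have hstar : ∀ S : Finset (Fin n), ∃ S',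
          S.card = k → (S'.card = k ∧ ∀ A, A.card = k+1 → S ⊆ A → S' ⊆ f A) := by
        intro S
        by_cases h : S.card = k
        · obtain ⟨S', h1, h2⟩ := star_lemma hkpos hn f hcard hinj hadj S h
          exact ⟨S', fun _ => ⟨h1, h2⟩⟩
        · exact ⟨∅, fun hh => absurd hh h⟩
      choose g hg using hstar
      have hgcard : ∀ S, S.card = k → (g S).card = k := fun S h => (hg S h).1
      have hgsub : ∀ S A, S.card = k → A.card = k+1 → S ⊆ A → g S ⊆ f A :=
        fun S A h h1 h2 => (hg S h).2 A h1 h2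
      -- star finsets
      let Sig : Finset (Fin n) → Finset (Finset (Fin n)) :=
        fun S => (univ.powersetCard (k+1)).filter (fun B => S ⊆ B)
      have hSigmem : ∀ S A, A ∈ Sig S ↔ (A.card = k+1 ∧ S ⊆ A) := by
        intro S A
        simp only [Sig, mem_filter, Finset.mem_powersetCard_univ]
      have hSigcard : ∀ S : Finset (Fin n), S.card = k → (Sig S).card = n - k := by
        intro S h
        have := card_supersets S (k+1) (by omega)
        rw [h] at this
        rw [show (k+1) - k = 1 from by omega, Nat.choose_one_right] at this
        exact this
      have hmaps : ∀ S, S.card = k → (Sig S).image f = Sig (g S) := by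
        intro S hScard
        apply Finset.eq_of_subset_of_card_le
        · intro B hB
          obtain ⟨A, hA, rfl⟩ := Finset.mem_image.mp hB
          rw [hSigmem] at hA
          rw [hSigmem]
          exact ⟨hcard A hA.1, hgsub S A hScard hA.1 hA.2⟩
        · rw [hSigcard _ (hgcard S hScard)]
          rw [Finset.card_image_of_injOn (fun A hA B hB hAB =>
            hinj A B ((hSigmem S A).mp hA).1 ((hSigmem S B).mp hB).1 hAB)]
          rw [hSigcard S hScard]
      have hSigeq : ∀ S T, S.card = k → T.card = k → g S = g T → Sig S = Sig T := by
        intro S T hScard hTcard hgeq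
        have h1 : (Sig S).image f = (Sig T).image f := by
          rw [hmaps S hScard, hmaps T hTcard, hgeq]
        ext A
        constructor
        · intro hA
          have : f A ∈ (Sig T).image f := h1 ▸ Finset.mem_image_of_mem f hA
          obtain ⟨A', hA', hfA⟩ := Finset.mem_image.mp this
          rwa [← hinj A' A ((hSigmem T A').mp hA').1 ((hSigmem S A).mp hA).1 hfA]
        · intro hA
          have : f A ∈ (Sig S).image f := h1.symm ▸ Finset.mem_image_of_mem f hA
          obtain ⟨A', hA', hfA⟩ := Finset.mem_image.mp this
          rwa [← hinj A' A ((hSigmem S A').mp hA').1 ((hSigmem T A).mp hA).1 hfA]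
      have ginj : ∀ S T, S.card = k → T.card = k → g S = g T → S = T := by
        intro S T hScard hTcard hgeq
        have hSig := hSigeq S T hScard hTcard hgeq
        have hSc : 1 < (Sᶜ).card := by
          rw [card_compl, Fintype.card_fin, hScard]; omega
        obtain ⟨a, ha, b, hb, hab⟩ := Finset.one_lt_card.mp hSc
        rw [Finset.mem_compl] at ha hb
        have hmema : insert a S ∈ Sig T := by
          rw [← hSig, hSigmem]
          exact ⟨by rw [Finset.card_insert_of_notMem ha, hScard], Finset.subset_insert a S⟩
        have hmemb : insert b S ∈ Sig T := by
          rw [← hSig, hSigmem]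
          exact ⟨by rw [Finset.card_insert_of_notMem hb, hScard], Finset.subset_insert b S⟩
        have hTS : T ⊆ S := by
          rw [← insert_inter_insert hab (S := S)]
          exact Finset.subset_inter ((hSigmem T _).mp hmema).2 ((hSigmem T _).mp hmemb).2
        exact (Finset.eq_of_subset_of_card_le hTS (by rw [hScard, hTcard])).symm
      have inter_ne : ∀ P Q : Finset (Fin n), P.card = k → Q.card = k → P ≠ Q →
          (P ∩ Q).card + 1 ≤ k := by
        intro P Q hP hQ hPQ
        by_contra hcc
        push_neg at hcc
        have hle : (P ∩ Q).card ≤ k := hP ▸ Finset.card_le_card Finset.inter_subset_left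
        have hcc' : (P ∩ Q).card = k := by omega
        have e1 : P ∩ Q = P := Finset.eq_of_subset_of_card_le Finset.inter_subset_left
          (by rw [hP, hcc'])
        have e2 : P ∩ Q = Q := Finset.eq_of_subset_of_card_le Finset.inter_subset_right
          (by rw [hQ, hcc'])
        exact hPQ (e1 ▸ e2)
      have gadj : ∀ S T, S.card = k → T.card = k →
          ((S ∩ T).card + 1 = k ↔ ((g S) ∩ (g T)).card + 1 = k) := by
        intro S T hScard hTcard
        constructor
        · intro h
          have hST : S ≠ T := by
            intro he; rw [he, Finset.inter_self, hTcard] at h; omega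
          have hgST : g S ≠ g T := fun he => hST (ginj S T hScard hTcard he)
          have hU : (S ∪ T).card = k + 1 := by
            have := Finset.card_union_add_card_inter S T
            rw [hScard, hTcard] at this; omega
          have h1 : g S ⊆ f (S ∪ T) := hgsub S _ hScard hU Finset.subset_union_left
          have h2 : g T ⊆ f (S ∪ T) := hgsub T _ hTcard hU Finset.subset_union_right
          have h3 : (g S ∪ g T).card ≤ k + 1 := by
            rw [← hcard _ hU]
            exact Finset.card_le_card (Finset.union_subset h1 h2)
          have h4 := Finset.card_union_add_card_inter (g S) (g T)
          rw [hgcard S hScard, hgcard T hTcard] at h4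
          have h5 := inter_ne _ _ (hgcard S hScard) (hgcard T hTcard) hgST
          omega
        · intro h
          have hgST : g S ≠ g T := by
            intro he; rw [he, Finset.inter_self, hgcard T hTcard] at h; omega
          have hST : S ≠ T := fun he => hgST (he ▸ rfl)
          have hB : (g S ∪ g T).card = k + 1 := by
            have := Finset.card_union_add_card_inter (g S) (g T)
            rw [hgcard S hScard, hgcard T hTcard] at this; omega
          have hBS : g S ∪ g T ∈ Sig (g S) := by
            rw [hSigmem]; exact ⟨hB, Finset.subset_union_left⟩
          have hBT : g S ∪ g T ∈ Sig (g T) := by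
            rw [hSigmem]; exact ⟨hB, Finset.subset_union_right⟩
          rw [← hmaps S hScard] at hBS
          rw [← hmaps T hTcard] at hBT
          obtain ⟨A1, hA1, hfA1⟩ := Finset.mem_image.mp hBS
          obtain ⟨A2, hA2, hfA2⟩ := Finset.mem_image.mp hBT
          rw [hSigmem] at hA1 hA2
          have hA12 : A1 = A2 := hinj A1 A2 hA1.1 hA2.1 (by rw [hfA1, hfA2])
          have hsub : S ∪ T ⊆ A1 := Finset.union_subset hA1.2 (hA12 ▸ hA2.2)
          have h6 : (S ∪ T).card ≤ k + 1 := hA1.1 ▸ Finset.card_le_card hsub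
          have h7 := Finset.card_union_add_card_inter S T
          rw [hScard, hTcard] at h7
          have h8 := inter_ne _ _ hScard hTcard hST
          omega
      obtain ⟨σ, hσ⟩ := ih (by omega) g hgcard ginj gadj
      refine ⟨σ, fun A hA => ?_⟩
      have hA2 : 1 < A.card := by omega
      obtain ⟨a, ha, b, hb, hab⟩ := Finset.one_lt_card.mp hA2
      have hea : (A.erase a).card = k := by
        rw [Finset.card_erase_of_mem ha, hA]
        omega
      have heb : (A.erase b).card = k := by
        rw [Finset.card_erase_of_mem hb, hA]
        omega
      have himg : A.image σ ⊆ f A := by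
        intro x hx
        obtain ⟨y, hy, rfl⟩ := Finset.mem_image.mp hx
        by_cases hya : y = a
        · have hm : σ y ∈ (A.erase b).image σ :=
            Finset.mem_image_of_mem _ (Finset.mem_erase.mpr ⟨hya ▸ hab, hy⟩)
          rw [← hσ _ heb] at hm
          exact hgsub _ _ heb hA (Finset.erase_subset b A) hm
        · have hm : σ y ∈ (A.erase a).image σ :=
            Finset.mem_image_of_mem _ (Finset.mem_erase.mpr ⟨hya, hy⟩)
          rw [← hσ _ hea] at hm
          exact hgsub _ _ hea hA (Finset.erase_subset a A) hm
      refine (Finset.eq_of_subset_of_card_le himg ?_).symm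
      rw [Finset.card_image_of_injective A σ.injective, hcard A hA, hA]

abbrev Vt (n k l : ℕ) := {s : Finset (Fin n) // s.card = k ∨ s.card = l}

instance {n k l : ℕ} : DecidableRel (setInclusionGraph n k l).Adj :=
  fun v w => inferInstanceAs (Decidable (v.1 ⊂ w.1 ∨ w.1 ⊂ v.1))

section assembly

variable {n k l : ℕ}

lemma count_sup (hln : l < n) (A : Finset (Fin n)) (hA : A.card ≤ l) :
    Fintype.card {B : Finset (Fin n) // B.card = l ∧ A ⊆ B} =
      (n - A.card).choose (l - A.card) := by
  classical
  rw [Fintype.card_subtype, ← card_supersets A l hA]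
  congr 1
  ext B
  simp only [mem_filter, Finset.mem_powersetCard_univ, Finset.mem_univ, true_and]

lemma count_sup_zero (A : Finset (Fin n)) (hA : l < A.card) :
    Fintype.card {B : Finset (Fin n) // B.card = l ∧ A ⊆ B} = 0 := by
  classical
  rw [Fintype.card_eq_zero_iff]
  constructor
  rintro ⟨B, hB, hAB⟩
  have := Finset.card_le_card hAB
  omega

noncomputable def nbrEquivK (hkl : k < l) (v : Vt n k l) (hv : v.1.card = k) :
    {w : Vt n k l // (setInclusionGraph n k l).Adj v w} ≃
      {B : Finset (Fin n) // B.card = l ∧ v.1 ⊆ B} where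
  toFun w := ⟨w.1.1, by
    rcases w.2 with h | h
    · have h1 := Finset.card_lt_card h
      rcases w.1.2 with h2 | h2
      · omega
      · exact ⟨h2, h.subset⟩
    · have h1 := Finset.card_lt_card h
      rcases w.1.2 with h2 | h2 <;> omega⟩
  invFun B := ⟨⟨B.1, Or.inr B.2.1⟩, Or.inl (B.2.2.ssubset_of_ne (by
    intro he
    have h3 : v.1.card = B.1.card := congrArg Finset.card he
    rw [hv, B.2.1] at h3
    omega))⟩
  left_inv w := by ext1; rfl
  right_inv B := by ext1; rfl

noncomputable def nbrEquivL (hkl : k < l) (v : Vt n k l) (hv : v.1.card = l) :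
    {w : Vt n k l // (setInclusionGraph n k l).Adj v w} ≃
      {B : Finset (Fin n) // B.card = k ∧ B ⊆ v.1} where
  toFun w := ⟨w.1.1, by
    rcases w.2 with h | h
    · have h1 := Finset.card_lt_card h
      rcases w.1.2 with h2 | h2 <;> omega
    · have h1 := Finset.card_lt_card h
      rcases w.1.2 with h2 | h2
      · exact ⟨h2, h.subset⟩
      · omega⟩
  invFun B := ⟨⟨B.1, Or.inl B.2.1⟩, Or.inr (B.2.2.ssubset_of_ne (by
    intro he
    have h3 : B.1.card = v.1.card := congrArg Finset.card he
    rw [hv, B.2.1] at h3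
    omega))⟩
  left_inv w := by ext1; rfl
  right_inv B := by ext1; rfl

lemma count_nbr_k (hkl : k < l) (hln : l < n) (v : Vt n k l) (hv : v.1.card = k) :
    Fintype.card {w : Vt n k l // (setInclusionGraph n k l).Adj v w}
      = (n - k).choose (l - k) := by
  classical
  rw [Fintype.card_congr (nbrEquivK hkl v hv)]
  rw [count_sup hln _ (by omega : v.1.card ≤ l), hv]

lemma count_nbr_l (hkl : k < l) (v : Vt n k l) (hv : v.1.card = l) :
    Fintype.card {w : Vt n k l // (setInclusionGraph n k l).Adj v w} = l.choose k := by
  classical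
  rw [Fintype.card_congr (nbrEquivL hkl v hv)]
  rw [Fintype.card_subtype]
  rw [show (univ.filter (fun B : Finset (Fin n) => B.card = k ∧ B ⊆ v.1))
      = (v.1).powersetCard k from by
    ext B
    simp only [mem_filter, Finset.mem_univ, true_and, Finset.mem_powersetCard]
    tauto]
  rw [Finset.card_powersetCard, hv]

lemma deg_ne_deg (hk : 1 ≤ k) (hkl : k < l) (hsum : k + l < n) :
    l.choose k < (n - k).choose (l - k) := by
  have h1 : l.choose k = l.choose (l - k) := (Nat.choose_symm (le_of_lt hkl)).symm
  have h2' := Nat.choose_succ_succ l (l - k - 1)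
  simp only [Nat.succ_eq_add_one] at h2'
  rw [show l - k - 1 + 1 = l - k from by omega] at h2'
  have hpos : 0 < l.choose (l - k - 1) := Nat.choose_pos (by omega)
  have h3 : (l + 1).choose (l - k) ≤ (n - k).choose (l - k) :=
    Nat.choose_le_choose _ (by omega)
  omega

lemma iso_nbr_card (e : setInclusionGraph n k l ≃g setInclusionGraph n k l) (v : Vt n k l) :
    Fintype.card {w : Vt n k l // (setInclusionGraph n k l).Adj v w}
      = Fintype.card {w : Vt n k l // (setInclusionGraph n k l).Adj (e v) w} := by
  classical
  exact Fintype.card_congr (Equiv.subtypeEquiv e.toEquiv (fun w => e.map_rel_iff.symm))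

lemma side_k (hk : 1 ≤ k) (hkl : k < l) (hsum : k + l < n)
    (e : setInclusionGraph n k l ≃g setInclusionGraph n k l) (v : Vt n k l)
    (hv : v.1.card = k) : (e v).1.card = k := by
  rcases (e v).2 with h | h
  · exact h
  · exfalso
    have h1 := iso_nbr_card e v
    rw [count_nbr_k hkl (by omega) v hv, count_nbr_l hkl (e v) h] at h1
    have := deg_ne_deg hk hkl hsum
    omega

lemma side_l (hk : 1 ≤ k) (hkl : k < l) (hsum : k + l < n)
    (e : setInclusionGraph n k l ≃g setInclusionGraph n k l) (v : Vt n k l)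
    (hv : v.1.card = l) : (e v).1.card = l := by
  rcases (e v).2 with h | h
  · exfalso
    have h2 := side_k hk hkl hsum e.symm (e v) h
    rw [RelIso.symm_apply_apply] at h2
    omega
  · exact h

end assembly

section assembly2
variable {n k l : ℕ}

noncomputable def nbr2Equiv (hkl : k < l) (v w : Vt n k l) (hv : v.1.card = k)
    (hw : w.1.card = k) :
    {u : Vt n k l // (setInclusionGraph n k l).Adj v u ∧ (setInclusionGraph n k l).Adj w u} ≃
      {B : Finset (Fin n) // B.card = l ∧ v.1 ∪ w.1 ⊆ B} where
  toFun u := ⟨u.1.1, by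
    have h1 : u.1.1.card = l ∧ v.1 ⊆ u.1.1 := by
      rcases u.2.1 with h | h
      · have := Finset.card_lt_card h
        rcases u.1.2 with h2 | h2
        · omega
        · exact ⟨h2, h.subset⟩
      · have := Finset.card_lt_card h
        rcases u.1.2 with h2 | h2 <;> omega
    have h2 : w.1 ⊆ u.1.1 := by
      rcases u.2.2 with h | h
      · exact h.subset
      · have := Finset.card_lt_card h
        omega
    exact ⟨h1.1, Finset.union_subset h1.2 h2⟩⟩
  invFun B := by
    refine ⟨⟨B.1, Or.inr B.2.1⟩, Or.inl ?_, Or.inl ?_⟩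
    · refine ((Finset.union_subset_iff.mp B.2.2).1).ssubset_of_ne ?_
      intro he
      have h3 : v.1.card = B.1.card := congrArg Finset.card he
      rw [hv, B.2.1] at h3
      omega
    · refine ((Finset.union_subset_iff.mp B.2.2).2).ssubset_of_ne ?_
      intro he
      have h3 : w.1.card = B.1.card := congrArg Finset.card he
      rw [hw, B.2.1] at h3
      omega
  left_inv u := by ext1; rfl
  right_inv B := by ext1; rfl

lemma common_count_iff (hk : 1 ≤ k) (hkl : k < l) (hln : l < n)
    (v w : Vt n k l) (hv : v.1.card = k) (hw : w.1.card = k) :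
    ((v.1 ∩ w.1).card + 1 = k) ↔
      Fintype.card {u : Vt n k l //
          (setInclusionGraph n k l).Adj v u ∧ (setInclusionGraph n k l).Adj w u}
        = (n - (k+1)).choose (l - (k+1)) := by
  classical
  have hcards := Finset.card_union_add_card_inter v.1 w.1
  rw [hv, hw] at hcards
  rw [Fintype.card_congr (nbr2Equiv hkl v w hv hw)]
  constructor
  · intro h
    have hu : (v.1 ∪ w.1).card = k + 1 := by omega
    rw [count_sup hln _ (by omega), hu]
  · intro h
    by_cases hle : (v.1 ∪ w.1).card ≤ l
    · rw [count_sup hln _ hle] at h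
      have := choose_sub_injOn hln hle (by omega : k + 1 ≤ l) h
      omega
    · rw [count_sup_zero _ (by omega)] at h
      have hpos : 0 < (n - (k+1)).choose (l - (k+1)) := Nat.choose_pos (by omega)
      omega

lemma iso_johnson (hk : 1 ≤ k) (hkl : k < l) (hsum : k + l < n)
    (e : setInclusionGraph n k l ≃g setInclusionGraph n k l)
    (v w : Vt n k l) (hv : v.1.card = k) (hw : w.1.card = k) :
    ((v.1 ∩ w.1).card + 1 = k) ↔ (((e v).1 ∩ (e w).1).card + 1 = k) := by
  classical
  have hln : l < n := by omega
  rw [common_count_iff hk hkl hln v w hv hw,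
    common_count_iff hk hkl hln (e v) (e w) (side_k hk hkl hsum e v hv)
      (side_k hk hkl hsum e w hw)]
  have hcong : Fintype.card {u : Vt n k l //
      (setInclusionGraph n k l).Adj v u ∧ (setInclusionGraph n k l).Adj w u}
      = Fintype.card {u : Vt n k l //
      (setInclusionGraph n k l).Adj (e v) u ∧ (setInclusionGraph n k l).Adj (e w) u} :=
    Fintype.card_congr (Equiv.subtypeEquiv e.toEquiv
      (fun u => (and_congr e.map_rel_iff e.map_rel_iff).symm))
  rw [hcong]

def permIso (σ : Equiv.Perm (Fin n)) :
    setInclusionGraph n k l ≃g setInclusionGraph n k l where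
  toEquiv := Equiv.subtypeEquiv σ.finsetCongr (by
    intro s
    simp only [Equiv.finsetCongr_apply, Finset.card_map])
  map_rel_iff' := by
    intro v w
    show ((_ : Finset (Fin n)) ⊂ _ ∨ (_ : Finset (Fin n)) ⊂ _) ↔ ((_ : Finset (Fin n)) ⊂ _ ∨ (_ : Finset (Fin n)) ⊂ _)
    simp only [Equiv.subtypeEquiv_apply, Equiv.finsetCongr_apply, Finset.map_ssubset_map]

lemma permIso_val (σ : Equiv.Perm (Fin n)) (v : Vt n k l) :
    ((permIso (k := k) (l := l) σ) v).1 = v.1.map σ.toEmbedding := rfl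

end assembly2

section final
variable {n k l : ℕ}

lemma permIso_mul (σ τ : Equiv.Perm (Fin n)) :
    permIso (k := k) (l := l) (σ * τ) = permIso σ * permIso τ := by
  apply RelIso.ext
  intro v
  apply Subtype.ext
  show v.1.map (σ * τ).toEmbedding = ((permIso σ) ((permIso τ) v)).1
  rw [permIso_val, permIso_val, Finset.map_map]
  rfl

noncomputable def permHom : Equiv.Perm (Fin n) →*
    (setInclusionGraph n k l ≃g setInclusionGraph n k l) :=
  MonoidHom.mk' (fun σ => permIso σ) permIso_mul

lemma permHom_inj (hk : 1 ≤ k) (hkl : k < l) (hln : l < n) :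
    Function.Injective (permHom (n := n) (k := k) (l := l)) := by
  intro σ τ h
  apply Equiv.ext
  intro i
  by_contra hne
  set j := τ.symm (σ i) with hj
  have hji : j ≠ i := by
    intro he
    apply hne
    have : τ j = σ i := τ.apply_symm_apply (σ i)
    rw [he] at this
    exact this.symm
  have hin : ({i} : Finset (Fin n)) ⊆ univ.erase j := by
    intro x hx
    rw [Finset.mem_singleton] at hx
    rw [hx]
    exact Finset.mem_erase.mpr ⟨fun he => hji he.symm, Finset.mem_univ i⟩
  obtain ⟨S, hiS, hSj, hScard⟩ := Finset.exists_subsuperset_card_eq (n := k) hin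
    (by rw [Finset.card_singleton]; omega)
    (by rw [Finset.card_erase_of_mem (Finset.mem_univ j), Finset.card_univ, Fintype.card_fin]
        omega)
  have hiS' : i ∈ S := hiS (Finset.mem_singleton_self i)
  have hv := congrArg (fun (e : setInclusionGraph n k l ≃g setInclusionGraph n k l) =>
    (e ⟨S, Or.inl hScard⟩).1) h
  simp only [permHom, MonoidHom.mk'_apply, permIso_val] at hv
  have hmem : σ i ∈ S.map τ.toEmbedding := by
    rw [← hv]
    exact Finset.mem_map_of_mem _ hiS'
  obtain ⟨x, hxS, hx⟩ := Finset.mem_map.mp hmem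
  have : x = j := by
    rw [hj]
    apply_fun τ
    rw [τ.apply_symm_apply]
    exact hx
  subst this
  have := hSj hxS
  rw [Finset.mem_erase] at this
  exact this.1 rfl

lemma permHom_surj (hk : 1 ≤ k) (hkl : k < l) (hsum : k + l < n) :
    Function.Surjective (permHom (n := n) (k := k) (l := l)) := by
  classical
  intro e
  -- the k-set map
  obtain ⟨σ, hσ⟩ := johnson_key k (by omega)
    (fun A => if h : A.card = k then (e ⟨A, Or.inl h⟩).1 else A)
    (by
      intro A h
      simp only [dif_pos h]
      exact side_k hk hkl hsum e ⟨A, Or.inl h⟩ h)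
    (by
      intro A B hA hB heq
      simp only [dif_pos hA, dif_pos hB] at heq
      have h2 := e.toEquiv.injective (Subtype.ext heq)
      exact congrArg Subtype.val h2)
    (by
      intro A B hA hB
      have h3 := iso_johnson hk hkl hsum e ⟨A, Or.inl hA⟩ ⟨B, Or.inl hB⟩ hA hB
      simp only [dif_pos hA, dif_pos hB]
      exact h3)
  have hσ' : ∀ (A : Finset (Fin n)) (h : A.card = k), (e ⟨A, Or.inl h⟩).1 = A.image σ := by
    intro A h
    have h1 := hσ A h
    rwa [dif_pos h] at h1
  -- the l-set action
  have hσl : ∀ v : Vt n k l, v.1.card = l → (e v).1 = v.1.image σ := by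
    intro v hv
    have hev := side_l hk hkl hsum e v hv
    refine (Finset.eq_of_subset_of_card_le ?_ ?_).symm
    · intro x hx
      obtain ⟨y, hy, rfl⟩ := Finset.mem_image.mp hx
      obtain ⟨A, hyA, hAv, hAcard⟩ := Finset.exists_subsuperset_card_eq (n := k)
        (Finset.singleton_subset_iff.mpr hy)
        (by rw [Finset.card_singleton]; omega) (by rw [hv]; omega)
      have hadj : (setInclusionGraph n k l).Adj ⟨A, Or.inl hAcard⟩ v := by
        left
        refine hAv.ssubset_of_ne ?_
        intro he
        have h3 : A.card = v.1.card := congrArg Finset.card he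
        rw [hAcard, hv] at h3
        omega
      have hadj2 := e.map_rel_iff.mpr hadj
      have hsub : (e ⟨A, Or.inl hAcard⟩).1 ⊆ (e v).1 := by
        rcases hadj2 with h | h
        · exact h.subset
        · exfalso
          have h4 := Finset.card_lt_card h
          rw [hev, side_k hk hkl hsum e ⟨A, Or.inl hAcard⟩ hAcard] at h4
          omega
      apply hsub
      rw [hσ' A hAcard]
      exact Finset.mem_image_of_mem _ (hyA (Finset.mem_singleton_self y))
    · rw [Finset.card_image_of_injective _ σ.injective, hev, hv]
  refine ⟨σ, ?_⟩
  apply RelIso.ext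
  intro v
  apply Subtype.ext
  show v.1.map σ.toEmbedding = (e v).1
  rw [Finset.map_eq_image]
  simp only [Equiv.coe_toEmbedding]
  rcases v.2 with h | h
  · rw [show v = ⟨v.1, Or.inl h⟩ from Subtype.ext rfl, hσ' v.1 h]
  · exact (hσl v h).symm

end final

/-- For `1 ≤ k < l ≤ n−1` and `k + l ≤ n` with `n ≠ k + l`, the automorphism
group of the set-inclusion graph `G(n,k,l)` is isomorphic to `Sym([n])`. -/
theorem stmt_7 (n k l : ℕ) (hk : 1 ≤ k) (hkl : k < l) (hl : l ≤ n - 1)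
    (hsum : k + l ≤ n) (hne : n ≠ k + l) :
    Nonempty ((setInclusionGraph n k l ≃g setInclusionGraph n k l) ≃* Equiv.Perm (Fin n)) := by
  have hsum' : k + l < n := by omega
  exact ⟨(MulEquiv.ofBijective (permHom (n := n) (k := k) (l := l))
    ⟨permHom_inj hk hkl (by omega), permHom_surj hk hkl hsum'⟩).symm⟩
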